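/- arXiv:1809.06761 — 8 statements merged into one kernel-verified Lean document; each statement's English description precedes it below -/
import Mathlib

section
/- Let ⊢ be a finitary logic and X an r-direct system of matrices each of which is a nontrivial model of ⊢. Then the Płonka sum of X is a model of the containment companion ⊢^r: whenever Γ ⊢^r φ and h is an evaluation into the Płonka sum with h[Γ] ⊆ ⋃_{i ∈ I} F_i, then h(φ) ∈ ⋃_{i ∈ I} F_i. -/
open FirstOrder FirstOrder.Language

variable {L : FirstOrder.Language.{0, 0}}

/-- The set of variables occurring in a formula (term). -/
def Tvar (φ : L.Term ℕ) : Set ℕ := {x | x ∈ φ.varFinset}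

/-- The set of variables occurring in a set of formulas. -/
def SVar (Γ : Set (L.Term ℕ)) : Set ℕ := ⋃ γ ∈ Γ, Tvar γ

/-- The image of a set of formulas under a substitution. -/
def SubstImg (σ : ℕ → L.Term ℕ) (Γ : Set (L.Term ℕ)) : Set (L.Term ℕ) :=
  (fun ψ => ψ.subst σ) '' Γ

/-- A logic: a substitution-invariant consequence relation on formulas. -/
structure ConsLogic (L : FirstOrder.Language.{0, 0}) where
  deriv : Set (L.Term ℕ) → L.Term ℕ → Prop
  refl : ∀ Γ φ, φ ∈ Γ → deriv Γ φ
  mono : ∀ Γ Δ φ, Γ ⊆ Δ → deriv Γ φ → deriv Δ φ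
  cut : ∀ Γ Δ φ, (∀ δ ∈ Δ, deriv Γ δ) → deriv (Γ ∪ Δ) φ → deriv Γ φ
  substInv : ∀ Γ φ (σ : ℕ → L.Term ℕ), deriv Γ φ → deriv (SubstImg σ Γ) (φ.subst σ)

/-- A consequence relation is finitary. -/
def FinitaryRel (R : Set (L.Term ℕ) → L.Term ℕ → Prop) : Prop :=
  ∀ Γ φ, R Γ φ → ∃ Δ : Finset (L.Term ℕ), ↑Δ ⊆ Γ ∧ R ↑Δ φ

/-- Σ is an antitheorem of the consequence relation `R`. -/
def IsAntitheorem (R : Set (L.Term ℕ) → L.Term ℕ → Prop) (S : Set (L.Term ℕ)) : Prop :=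
  ∀ (σ : ℕ → L.Term ℕ) (φ : L.Term ℕ), R (SubstImg σ S) φ

/-- The containment companion of a logic. -/
def CC (V : ConsLogic L) (Γ : Set (L.Term ℕ)) (φ : L.Term ℕ) : Prop :=
  (V.deriv Γ φ ∧ Tvar φ ⊆ SVar Γ) ∨ ∃ S, IsAntitheorem V.deriv S ∧ S ⊆ Γ

/-- The matrix ⟨A, F⟩ is a model of the consequence relation `R`. -/
def IsMatrixModel (R : Set (L.Term ℕ) → L.Term ℕ → Prop) (A : Type) [L.Structure A]
    (F : Set A) : Prop :=
  ∀ Γ φ, R Γ φ → ∀ h : ℕ → A, (∀ γ ∈ Γ, Term.realize h γ ∈ F) → Term.realize h φ ∈ F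

/-- An isomorphism of matrices: an isomorphism of the underlying algebras mapping the
filter exactly onto the filter. -/
def MatrixIso (A : Type) [L.Structure A] (F : Set A) (B : Type) [L.Structure B]
    (G : Set B) : Prop :=
  ∃ e : L.Equiv A B, ∀ a, a ∈ F ↔ e a ∈ G

/-- The one-element structure. -/
def punitStruct : L.Structure PUnit where
  funMap _ _ := PUnit.unit
  RelMap _ _ := False

/-- An r-direct system of matrices over the join-semilattice `I`. -/
structure RDirectSystem (L : FirstOrder.Language.{0, 0}) (I : Type) [SemilatticeSup I] where
  A : I → Type
  str : ∀ i, L.Structure (A i)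
  F : ∀ i, Set (A i)
  f : ∀ i j, i ≤ j → A i → A j
  f_hom : ∀ i j (h : i ≤ j) (n : ℕ) (g : L.Functions n) (as : Fin n → A i),
    f i j h (@Structure.funMap L (A i) (str i) n g as) =
      @Structure.funMap L (A j) (str j) n g (fun k => f i j h (as k))
  f_id : ∀ i (a : A i), f i i le_rfl a = a
  f_comp : ∀ i j k (hij : i ≤ j) (hjk : j ≤ k) (a : A i),
    f j k hjk (f i j hij a) = f i k (hij.trans hjk) a
  plus_sup : ∀ i j, (F i).Nonempty → (F j).Nonempty → (F (i ⊔ j)).Nonempty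
  f_filter : ∀ i j (h : i ≤ j), (F j).Nonempty → f i j h ⁻¹' F j = F i

/-- The Płonka sum structure over an r-direct system (the language has no constants). -/
def RDirectSystem.plonkaStr {I : Type} [SemilatticeSup I] (S : RDirectSystem L I)
    [IsEmpty (L.Functions 0)] : L.Structure (Σ i, S.A i) where
  funMap {n} g as :=
    match n, g, as with
    | 0, g, _ => isEmptyElim g
    | (m + 1), g, as =>
      ⟨Finset.univ.sup' Finset.univ_nonempty fun k => (as k).1,
        @Structure.funMap L _ (S.str _) _ g fun k =>
          S.f (as k).1 _ (Finset.le_sup' (fun k => (as k).1) (Finset.mem_univ k)) (as k).2⟩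
  RelMap _ _ := False

/-- The filter of the Płonka sum of an r-direct system of matrices. -/
def RDirectSystem.filter {I : Type} [SemilatticeSup I] (S : RDirectSystem L I) :
    Set (Σ i, S.A i) := {a | a.2 ∈ S.F a.1}


/-- The application `t ∗ u` of the binary term `s` to formulas `t` and `u`. -/
def starT (s : L.Term (Fin 2)) (t u : L.Term ℕ) : L.Term ℕ := s.subst ![t, u]

/-- The result `χ(t, z̄)` of substituting the formula `t` for the variable `v` in `χ`. -/
def substVar (χ : L.Term ℕ) (v : ℕ) (t : L.Term ℕ) : L.Term ℕ :=
  χ.subst (fun m => if m = v then t else Term.var m)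

/-- `(ε, δ)` is an instance of one of the partition-function identities P1–P5,
read as term identities for `∗`. -/
def IsPIdentInstance (s : L.Term (Fin 2)) (ε δ : L.Term ℕ) : Prop :=
  (∃ a, ε = starT s a a ∧ δ = a) ∨
  (∃ a b c, ε = starT s a (starT s b c) ∧ δ = starT s (starT s a b) c) ∨
  (∃ a b c, ε = starT s a (starT s b c) ∧ δ = starT s a (starT s c b)) ∨
  (∃ (n : ℕ) (g : L.Functions (n + 1)) (as : Fin (n + 1) → L.Term ℕ) (b : L.Term ℕ),
    ε = starT s (Term.func g as) b ∧ δ = Term.func g (fun k => starT s (as k) b)) ∨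
  (∃ (n : ℕ) (g : L.Functions (n + 1)) (as : Fin (n + 1) → L.Term ℕ) (b : L.Term ℕ),
    ε = starT s b (Term.func g as) ∧ δ = (List.ofFn as).foldl (starT s) b)

/-- The consequence relation `R` has `s` as an r-partition function. -/
def HasRPartitionFunction (R : Set (L.Term ℕ) → L.Term ℕ → Prop) (s : L.Term (Fin 2)) :
    Prop :=
  (∀ i : Fin 2, i ∈ s.varFinset) ∧
  R {Term.var 0, Term.var 1} (starT s (Term.var 0) (Term.var 1)) ∧
  R {starT s (Term.var 0) (Term.var 1)} (Term.var 0) ∧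
  ∀ ε δ, IsPIdentInstance s ε δ → ∀ (χ : L.Term ℕ) (v : ℕ),
    R {substVar χ v ε} (substVar χ v δ) ∧ R {substVar χ v δ} (substVar χ v ε)

/-- The interpretation of the binary term `s` in the structure `A`. -/
def dotOf (A : Type) [L.Structure A] (s : L.Term (Fin 2)) : A → A → A :=
  fun a b => Term.realize ![a, b] s

/-- A binary operation on an `L`-structure is a partition function. -/
def IsPartitionFunction (A : Type) [L.Structure A] (d : A → A → A) : Prop :=
  (∀ a, d a a = a) ∧
  (∀ a b c, d a (d b c) = d (d a b) c) ∧
  (∀ a b c, d a (d b c) = d a (d c b)) ∧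
  (∀ (n : ℕ) (g : L.Functions (n + 1)) (as : Fin (n + 1) → A) (b : A),
    d (Structure.funMap g as) b = Structure.funMap g (fun k => d (as k) b)) ∧
  (∀ (n : ℕ) (g : L.Functions (n + 1)) (as : Fin (n + 1) → A) (b : A),
    d b (Structure.funMap g as) = (List.ofFn as).foldl d b)

/-- The equivalence relation `a ≈ b` induced by a partition function. -/
def PApprox {A : Type} (d : A → A → A) (a b : A) : Prop := d a b = a ∧ d b a = b
section Aux

variable {I : Type} [SemilatticeSup I] [IsEmpty (L.Functions 0)]

lemma term_varFinset_nonempty (t : L.Term ℕ) : t.varFinset.Nonempty := by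
  induction t with
  | var x => exact ⟨x, by simp⟩
  | @func l f ts ih =>
    cases l with
    | zero => exact isEmptyElim f
    | succ m =>
      obtain ⟨x, hx⟩ := ih 0
      exact ⟨x, Finset.mem_biUnion.2 ⟨0, Finset.mem_univ _, hx⟩⟩

lemma plonka_comp_le (S : RDirectSystem L I) (g : ℕ → Σ i, S.A i) (t : L.Term ℕ) :
    ∀ x ∈ t.varFinset, (g x).1 ≤ (@Term.realize L _ S.plonkaStr ℕ g t).1 := by
  induction t with
  | var y =>
    intro x hx
    simp only [Term.varFinset, Finset.mem_singleton] at hx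
    subst hx
    exact le_rfl
  | @func l f ts ih =>
    intro x hx
    cases l with
    | zero => exact isEmptyElim f
    | succ m =>
      simp only [Term.varFinset, Finset.mem_biUnion] at hx
      obtain ⟨k, -, hk⟩ := hx
      refine le_trans (ih k x hk) ?_
      exact Finset.le_sup' (fun k => (@Term.realize L _ S.plonkaStr ℕ g (ts k)).1)
        (Finset.mem_univ k)

lemma plonka_realize (S : RDirectSystem L I) (j : I) (g : ℕ → Σ i, S.A i)
    (h' : ℕ → S.A j) (t : L.Term ℕ)
    (hv : ∀ x ∈ t.varFinset, ∃ hle : (g x).1 ≤ j, S.f _ j hle (g x).2 = h' x) :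
    ∃ hle : (@Term.realize L _ S.plonkaStr ℕ g t).1 ≤ j,
      S.f _ j hle (@Term.realize L _ S.plonkaStr ℕ g t).2
        = @Term.realize L (S.A j) (S.str j) ℕ h' t := by
  revert hv
  induction t with
  | var x =>
    intro hv
    exact hv x (by simp)
  | @func l f ts ih =>
    intro hv
    cases l with
    | zero => exact isEmptyElim f
    | succ m =>
      have H : ∀ k, ∃ hle : (@Term.realize L _ S.plonkaStr ℕ g (ts k)).1 ≤ j,
          S.f _ j hle (@Term.realize L _ S.plonkaStr ℕ g (ts k)).2
            = @Term.realize L (S.A j) (S.str j) ℕ h' (ts k) := by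
        intro k
        exact ih k (fun x hx => hv x (Finset.mem_biUnion.2 ⟨k, Finset.mem_univ _, hx⟩))
      have hJ : (@Term.realize L _ S.plonkaStr ℕ g (Term.func f ts)).1 ≤ j := by
        show Finset.univ.sup' Finset.univ_nonempty
          (fun k => (@Term.realize L _ S.plonkaStr ℕ g (ts k)).1) ≤ j
        exact Finset.sup'_le _ _ (fun k _ => (H k).choose)
      refine ⟨hJ, ?_⟩
      show S.f _ j hJ (@Structure.funMap L _ (S.str _) _ f
          (fun k => S.f (@Term.realize L _ S.plonkaStr ℕ g (ts k)).1 _ _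
            (@Term.realize L _ S.plonkaStr ℕ g (ts k)).2))
        = @Structure.funMap L _ (S.str j) _ f
            (fun k => @Term.realize L (S.A j) (S.str j) ℕ h' (ts k))
      rw [S.f_hom]
      congr 1
      funext k
      refine (S.f_comp _ _ _ _ _ _).trans ?_
      exact (H k).choose_spec

end Aux
lemma shift_var_pos (t : L.Term ℕ) :
    ∀ x ∈ (t.subst (fun n => Term.var (n + 1))).varFinset, x ≠ 0 := by
  induction t with
  | var y =>
    intro x hx
    simp only [Term.subst, Term.varFinset, Finset.mem_singleton] at hx
    omega
  | @func l f ts ih =>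
    intro x hx
    simp only [Term.subst, Term.varFinset, Finset.mem_biUnion] at hx
    obtain ⟨k, -, hk⟩ := hx
    exact ih k x hk

lemma model_transfer {I : Type} [SemilatticeSup I] [IsEmpty (L.Functions 0)]
    (S : RDirectSystem L I) (V : ConsLogic L)
    (hmod : ∀ i, @IsMatrixModel L V.deriv (S.A i) (S.str i) (S.F i))
    (Δ : Finset (L.Term ℕ)) (hne : Δ.Nonempty) (φ : L.Term ℕ)
    (hder : V.deriv ↑Δ φ) (g : ℕ → Σ i, S.A i)
    (hΔF : ∀ δ ∈ Δ, @Term.realize L _ S.plonkaStr ℕ g δ ∈ S.filter) :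
    ∃ j : I, (S.F j).Nonempty ∧ (∀ δ ∈ Δ, ∀ x ∈ Term.varFinset δ, (g x).1 ≤ j) ∧
      ∀ h' : ℕ → S.A j,
        (∀ x, (∃ δ ∈ Δ, x ∈ Term.varFinset δ) →
          ∀ hle : (g x).1 ≤ j, S.f _ j hle (g x).2 = h' x) →
        @Term.realize L (S.A j) (S.str j) ℕ h' φ ∈ S.F j := by
  set j := Δ.sup' hne (fun δ => (@Term.realize L _ S.plonkaStr ℕ g δ).1) with hj
  have hFj : (S.F j).Nonempty := by
    refine Finset.sup'_induction hne _ (fun a ha b hb => S.plus_sup a b ha hb) ?_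
    intro δ hδ
    exact ⟨_, hΔF δ hδ⟩
  have hbound : ∀ δ ∈ Δ, ∀ x ∈ Term.varFinset δ, (g x).1 ≤ j := by
    intro δ hδ x hx
    exact le_trans (plonka_comp_le S g δ x hx)
      (Finset.le_sup' (fun δ => (@Term.realize L _ S.plonkaStr ℕ g δ).1) hδ)
  refine ⟨j, hFj, hbound, ?_⟩
  intro h' hcompat
  refine hmod j ↑Δ φ hder h' ?_
  intro γ hγ
  have hγΔ : γ ∈ Δ := hγ
  obtain ⟨hle, heq⟩ := plonka_realize S j g h' γ
    (fun x hx => ⟨hbound γ hγΔ x hx, hcompat x ⟨γ, hγΔ, hx⟩ _⟩)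
  rw [← heq]
  have hmem : (@Term.realize L _ S.plonkaStr ℕ g γ).2 ∈
      S.f _ j hle ⁻¹' S.F j := by
    rw [S.f_filter _ j hle hFj]
    exact hΔF γ hγΔ
  exact hmem
/-- Let `⊢` be a finitary logic and `X` an r-direct system of matrices,
each of which is a nontrivial model of `⊢`.  Then the Płonka sum of `X` is a model of the
containment companion `⊢^r`. -/
theorem statement_1 (L : FirstOrder.Language.{0, 0}) [IsEmpty (L.Functions 0)]
    (V : ConsLogic L) (hfin : FinitaryRel V.deriv)
    (I : Type) [SemilatticeSup I] (S : RDirectSystem L I)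
    (hmod : ∀ i, @IsMatrixModel L V.deriv (S.A i) (S.str i) (S.F i))
    (hnontriv : ∀ i, S.F i ≠ Set.univ)
    (Γ : Set (L.Term ℕ)) (φ : L.Term ℕ) (hder : CC V Γ φ)
    (h : ℕ → (Σ i, S.A i))
    (hΓ : ∀ γ ∈ Γ, @Term.realize L (Σ i, S.A i) S.plonkaStr ℕ h γ ∈ S.filter) :
    @Term.realize L (Σ i, S.A i) S.plonkaStr ℕ h φ ∈ S.filter := by
  rcases hder with ⟨hd, hvar⟩ | ⟨T, hT, hTsub⟩
  · -- containment case
    obtain ⟨Δ, hΔsub, hΔder⟩ := hfin Γ φ hd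
    have hex : ∀ x ∈ φ.varFinset, ∃ γ ∈ Γ, x ∈ Term.varFinset γ := by
      intro x hx
      have hx' : x ∈ SVar Γ := hvar (show x ∈ Tvar φ from hx)
      simp only [SVar, Set.mem_iUnion] at hx'
      obtain ⟨γ, hγ, hxγ⟩ := hx'
      exact ⟨γ, hγ, hxγ⟩
    classical
    set c : ℕ → L.Term ℕ := fun x =>
      if hx : ∃ γ ∈ Γ, x ∈ Term.varFinset γ then hx.choose else φ with hc
    have hcΓ : ∀ x ∈ φ.varFinset, c x ∈ Γ ∧ x ∈ Term.varFinset (c x) := by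
      intro x hx
      have hx' := hex x hx
      simp only [hc, dif_pos hx']
      exact ⟨hx'.choose_spec.1, hx'.choose_spec.2⟩
    set Δ' : Finset (L.Term ℕ) := Δ ∪ φ.varFinset.image c with hΔ'
    have hsub' : ↑Δ' ⊆ Γ := by
      intro δ hδ
      simp only [hΔ', Finset.coe_union, Set.mem_union, Finset.mem_coe,
        Finset.mem_image] at hδ
      rcases hδ with hδ | ⟨x, hx, rfl⟩
      · exact hΔsub hδ
      · exact (hcΓ x hx).1
    have hne : Δ'.Nonempty := by
      obtain ⟨x, hx⟩ := term_varFinset_nonempty φ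
      exact ⟨c x, Finset.mem_union_right _ (Finset.mem_image_of_mem c hx)⟩
    have hder' : V.deriv ↑Δ' φ :=
      V.mono ↑Δ ↑Δ' φ (Finset.coe_subset.2 Finset.subset_union_left) hΔder
    have hΔF : ∀ δ ∈ Δ', @Term.realize L _ S.plonkaStr ℕ h δ ∈ S.filter :=
      fun δ hδ => hΓ δ (hsub' hδ)
    obtain ⟨j, hFj, hbound, hclose⟩ := model_transfer S V hmod Δ' hne φ hder' h hΔF
    set h' : ℕ → S.A j := fun x =>
      if hle : (h x).1 ≤ j then S.f _ j hle (h x).2 else hFj.choose with hh'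
    have hcompat : ∀ x, (∃ δ ∈ Δ', x ∈ Term.varFinset δ) →
        ∀ hle : (h x).1 ≤ j, S.f _ j hle (h x).2 = h' x := by
      intro x _ hle
      simp only [hh', dif_pos hle]
    have hφ : @Term.realize L (S.A j) (S.str j) ℕ h' φ ∈ S.F j := hclose h' hcompat
    have hvφ : ∀ x ∈ φ.varFinset, ∃ hle : (h x).1 ≤ j,
        S.f _ j hle (h x).2 = h' x := by
      intro x hx
      have hcx : c x ∈ Δ' :=
        Finset.mem_union_right _ (Finset.mem_image_of_mem c hx)
      have hle : (h x).1 ≤ j := hbound (c x) hcx x (hcΓ x hx).2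
      exact ⟨hle, by simp only [hh', dif_pos hle]⟩
    obtain ⟨hleφ, heqφ⟩ := plonka_realize S j h h' φ hvφ
    show (@Term.realize L _ S.plonkaStr ℕ h φ).2 ∈ S.F _
    rw [← S.f_filter _ j hleφ hFj]
    show S.f _ j hleφ (@Term.realize L _ S.plonkaStr ℕ h φ).2 ∈ S.F j
    rw [heqφ]
    exact hφ
  · -- antitheorem case
    have hder0 : V.deriv (SubstImg (fun n => Term.var (n + 1)) T) (Term.var 0) :=
      hT _ _
    obtain ⟨Δ, hΔsub, hΔder⟩ := hfin _ _ hder0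
    set g : ℕ → Σ i, S.A i := fun n => h (n - 1) with hg
    have hΔF : ∀ δ ∈ Δ, @Term.realize L _ S.plonkaStr ℕ g δ ∈ S.filter := by
      intro δ hδ
      obtain ⟨s, hsT, rfl⟩ := hΔsub hδ
      letI := S.plonkaStr
      have : @Term.realize L _ S.plonkaStr ℕ g
          (s.subst fun n => Term.var (n + 1)) = @Term.realize L _ S.plonkaStr ℕ h s := by
        rw [Term.realize_subst]
        rfl
      rw [this]
      exact hΓ s (hTsub hsT)
    have h0 : ∀ δ ∈ Δ, ∀ x ∈ Term.varFinset δ, x ≠ 0 := by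
      intro δ hδ x hx
      obtain ⟨s, hsT, rfl⟩ := hΔsub hδ
      exact shift_var_pos s x hx
    rcases Finset.eq_empty_or_nonempty Δ with rfl | hne
    · exfalso
      set i := (h 0).1
      obtain ⟨a, ha⟩ := (Set.ne_univ_iff_exists_notMem _).1 (hnontriv i)
      have hd0 : V.deriv (∅ : Set (L.Term ℕ)) (Term.var 0) := by
        simpa using hΔder
      have := hmod i ∅ (Term.var 0) hd0 (fun _ => a) (by simp)
      exact ha this
    · obtain ⟨j, hFj, hbound, hclose⟩ :=
        model_transfer S V hmod Δ hne (Term.var 0) hΔder g hΔF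
      obtain ⟨a₀, ha₀⟩ := (Set.ne_univ_iff_exists_notMem _).1 (hnontriv j)
      classical
      set h' : ℕ → S.A j := fun x =>
        if x = 0 then a₀ else
          (if hle : (g x).1 ≤ j then S.f _ j hle (g x).2 else a₀) with hh'
      have hcompat : ∀ x, (∃ δ ∈ Δ, x ∈ Term.varFinset δ) →
          ∀ hle : (g x).1 ≤ j, S.f _ j hle (g x).2 = h' x := by
        rintro x ⟨δ, hδ, hxδ⟩ hle
        have hx0 : x ≠ 0 := h0 δ hδ x hxδ
        simp only [hh', if_neg hx0, dif_pos hle]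
      have := hclose h' hcompat
      simp only [Term.realize_var, hh', if_pos rfl] at this
      exact absurd this ha₀
end

section
/- Let ⊢ be a logic with r-partition function ∗, and let ⟨A, F⟩ be a model of ⊢ such that the interpretation · of the term ∗ in A is a partition function on A. Then: (a) for all a, b, c ∈ A, if b ≈ c and c ∈ F, then a·b ∈ F if and only if a ∈ F (i.e., whenever the ≈-class of b meets F, the Płonka homomorphism x ↦ x·b reflects and preserves membership in F); and (b) for all a, b ∈ F, a·b ∈ F (so the set of ≈-classes meeting F is closed under the join [a] ∨ [b] = [a·b]). -/
open FirstOrder FirstOrder.Language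

variable {L : FirstOrder.Language.{0, 0}}

/-- Let `⊢` be a logic with r-partition function `∗`, and `⟨A, F⟩` a
model of `⊢` such that the interpretation `·` of `∗` in `A` is a partition function.
Then (a) whenever `b ≈ c` and `c ∈ F`, one has `a·b ∈ F ↔ a ∈ F`, and
(b) `F` is closed under `·`. -/
theorem statement_3 (L : FirstOrder.Language.{0, 0}) [IsEmpty (L.Functions 0)]
    (V : ConsLogic L) (s : L.Term (Fin 2))
    (hpf : HasRPartitionFunction V.deriv s)
    (A : Type) [L.Structure A] (F : Set A)
    (hmod : IsMatrixModel V.deriv A F)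
    (hpart : IsPartitionFunction (L := L) A (dotOf A s)) :
    (∀ a b c : A, PApprox (dotOf A s) b c → c ∈ F → (dotOf A s a b ∈ F ↔ a ∈ F)) ∧
    (∀ a b : A, a ∈ F → b ∈ F → dotOf A s a b ∈ F) := by
  obtain ⟨hvar, hI, hII, _⟩ := hpf
  have hreal : ∀ (a b : A), Term.realize (fun n => if n = 0 then a else b)
      (starT s (Term.var 0) (Term.var 1)) = dotOf A s a b := by
    intro a b
    rw [starT, Term.realize_subst, dotOf]
    congr 1
    funext i
    fin_cases i <;> simp
  have mem1 : ∀ a b : A, a ∈ F → b ∈ F → dotOf A s a b ∈ F := by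
    intro a b ha hb
    have := hmod _ _ hI (fun n => if n = 0 then a else b) ?_
    · rwa [hreal] at this
    · intro γ hγ
      rcases hγ with h | h <;> subst h <;> simp [ha, hb]
  have mem2 : ∀ a b : A, dotOf A s a b ∈ F → a ∈ F := by
    intro a b hab
    have := hmod _ _ hII (fun n => if n = 0 then a else b) ?_
    · simpa using this
    · intro γ hγ
      rw [Set.mem_singleton_iff] at hγ
      subst hγ
      rwa [hreal]
  obtain ⟨P1, P2, P3, _⟩ := hpart
  have key : ∀ a b c : A, PApprox (dotOf A s) b c → dotOf A s a b = dotOf A s a c := by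
    intro a b c hbc
    obtain ⟨hbc', hcb⟩ := hbc
    calc dotOf A s a b = dotOf A s a (dotOf A s b c) := by rw [hbc']
    _ = dotOf A s a (dotOf A s c b) := P3 a b c
    _ = dotOf A s a c := by rw [hcb]
  constructor
  · intro a b c hbc hc
    rw [key a b c hbc]
    exact ⟨fun h => mem2 a c h, fun h => mem1 a c h hc⟩
  · exact mem1
end

section
/- Let ⊢ be a logic with r-partition function ∗, and let ⟨A, F⟩ be a model of the containment companion ⊢^r such that the interpretation · of the term ∗ in A is a partition function on A. Then every ≈-class meeting F, equipped with the restriction of F, is a model of ⊢: for every c ∈ F and every evaluation h into A such that h(x) ≈ c for every variable x, if Γ ⊢ φ and h[Γ] ⊆ F, then h(φ) ∈ F. -/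
open FirstOrder FirstOrder.Language

variable {L : FirstOrder.Language.{0, 0}}

section MyHelpers

lemma my_realize_eq_of_eqOn {A : Type} [L.Structure A] (t : L.Term ℕ) {f g : ℕ → A}
    (hfg : ∀ x ∈ t.varFinset, f x = g x) : Term.realize f t = Term.realize g t := by
  induction t with
  | var x => exact hfg x (by simp [Term.varFinset])
  | func F ts ih =>
    simp only [Term.realize]
    congr 1
    funext i
    exact ih i fun x hx => hfg x (by
      simp only [Term.varFinset, Finset.mem_biUnion]
      exact ⟨i, Finset.mem_univ i, hx⟩)

lemma my_mem_varFinset_subst {α β : Type} [DecidableEq α] [DecidableEq β]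
    (t : L.Term α) (σ : α → L.Term β) {i : α} (hi : i ∈ t.varFinset)
    {x : β} (hx : x ∈ (σ i).varFinset) : x ∈ (t.subst σ).varFinset := by
  induction t with
  | var j =>
    simp only [Term.varFinset, Finset.mem_singleton] at hi
    subst hi
    simpa [Term.subst] using hx
  | func F ts ih =>
    simp only [Term.varFinset, Term.subst, Finset.mem_biUnion] at hi ⊢
    obtain ⟨k, -, hk⟩ := hi
    exact ⟨k, Finset.mem_univ k, ih k hk⟩

lemma my_realize_starT {A : Type} [L.Structure A] (s : L.Term (Fin 2)) (t u : L.Term ℕ)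
    (h : ℕ → A) :
    Term.realize h (starT s t u) = dotOf A s (Term.realize h t) (Term.realize h u) := by
  simp only [starT, dotOf, Term.realize_subst]
  congr 1
  funext i
  fin_cases i <;> simp

lemma my_papprox_dot {A : Type} [L.Structure A] {s : L.Term (Fin 2)}
    (hp : IsPartitionFunction (L := L) A (dotOf A s)) {a b c : A}
    (hac : PApprox (dotOf A s) a c) (hbc : PApprox (dotOf A s) b c) :
    dotOf A s a b = a := by
  obtain ⟨-, P2, -, -, -⟩ := hp
  calc dotOf A s a b = dotOf A s (dotOf A s a c) b := by rw [hac.1]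
  _ = dotOf A s a (dotOf A s c b) := (P2 a c b).symm
  _ = dotOf A s a c := by rw [hbc.2]
  _ = a := hac.1

lemma my_foldl_const {A : Type} (d : A → A → A) (c : A) :
    ∀ l : List A, (∀ e ∈ l, d c e = c) → l.foldl d c = c := by
  intro l
  induction l with
  | nil => intro _; rfl
  | cons e l ih =>
    intro hl
    have h1 : d c e = c := hl e List.mem_cons_self
    simp only [List.foldl_cons, h1]
    exact ih fun e' he' => hl e' (List.mem_cons_of_mem e he')

lemma my_papprox_realize {A : Type} [L.Structure A] [IsEmpty (L.Functions 0)]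
    {s : L.Term (Fin 2)} (hp : IsPartitionFunction (L := L) A (dotOf A s))
    {c : A} (h : ℕ → A) (hc : ∀ x, PApprox (dotOf A s) (h x) c)
    (t : L.Term ℕ) : PApprox (dotOf A s) (Term.realize h t) c := by
  obtain ⟨-, -, -, P4, P5⟩ := hp
  induction t with
  | var x => exact hc x
  | @func n F ts ih =>
    match n, F, ts, ih with
    | 0, F, ts, ih => exact isEmptyElim F
    | (m + 1), F, ts, ih =>
      constructor
      · rw [Term.realize, P4]
        congr 1
        funext k
        exact (ih k).1
      · rw [Term.realize, P5]
        exact my_foldl_const _ c _ (by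
          intro e he
          rw [List.mem_ofFn] at he
          obtain ⟨k, rfl⟩ := he
          exact (ih k).2)

end MyHelpers

/-- Let `⊢` be a logic with r-partition function `∗`, and `⟨A, F⟩` a
model of the containment companion `⊢^r` such that the interpretation `·` of `∗` in `A`
is a partition function.  Then every `≈`-class meeting `F`, equipped with the restriction
of `F`, is a model of `⊢`: for every `c ∈ F` and every evaluation `h` taking values in the
`≈`-class of `c`, if `Γ ⊢ φ` and `h[Γ] ⊆ F`, then `h(φ) ∈ F`. -/
theorem statement_4 (L : FirstOrder.Language.{0, 0}) [IsEmpty (L.Functions 0)]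
    (V : ConsLogic L) (s : L.Term (Fin 2))
    (hpf : HasRPartitionFunction V.deriv s)
    (A : Type) [L.Structure A] (F : Set A)
    (hmod : IsMatrixModel (CC V) A F)
    (hpart : IsPartitionFunction (L := L) A (dotOf A s)) :
    ∀ c ∈ F, ∀ h : ℕ → A, (∀ x : ℕ, PApprox (dotOf A s) (h x) c) →
      ∀ (Γ : Set (L.Term ℕ)) (φ : L.Term ℕ), V.deriv Γ φ →
        (∀ γ ∈ Γ, Term.realize h γ ∈ F) → Term.realize h φ ∈ F := by
  intro c hc h hh Γ φ hΓφ hΓF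
  have hvar1 : (1 : Fin 2) ∈ s.varFinset := hpf.1 1
  rcases Set.eq_empty_or_nonempty Γ with hΓe | ⟨γ0, hγ0⟩
  · -- Γ is empty
    obtain ⟨z, hz⟩ := Infinite.exists_notMem_finset φ.varFinset
    set Γ'' : Set (L.Term ℕ) :=
      (fun x => starT s (Term.var z) (Term.var x)) '' Tvar φ with hΓ''
    have hcc : CC V Γ'' φ := by
      left
      constructor
      · exact V.mono Γ Γ'' φ (by rw [hΓe]; exact Set.empty_subset _) hΓφ
      · intro x hx
        refine Set.mem_biUnion (Set.mem_image_of_mem _ hx) ?_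
        exact my_mem_varFinset_subst s ![Term.var z, Term.var x] hvar1
          (by simp [Term.varFinset])
    set h'' : ℕ → A := Function.update h z c with hh''
    have hprem : ∀ γ ∈ Γ'', Term.realize h'' γ ∈ F := by
      rintro γ ⟨x, hx, rfl⟩
      have hxz : x ≠ z := by rintro rfl; exact hz hx
      rw [my_realize_starT]
      simp only [Term.realize_var, hh'', Function.update_self,
        Function.update_of_ne hxz]
      rw [(hh x).2]
      exact hc
    have hres := hmod Γ'' φ hcc h'' hprem
    have heq : Term.realize h'' φ = Term.realize h φ := by
      apply my_realize_eq_of_eqOn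
      intro x hx
      have : x ≠ z := by rintro rfl; exact hz hx
      exact Function.update_of_ne this c h
    rwa [heq] at hres
  · -- Γ is nonempty, with γ0 ∈ Γ
    set Γ'' : Set (L.Term ℕ) :=
      Γ ∪ (fun x => starT s γ0 (Term.var x)) '' Tvar φ with hΓ''
    have hcc : CC V Γ'' φ := by
      left
      constructor
      · exact V.mono Γ Γ'' φ Set.subset_union_left hΓφ
      · intro x hx
        refine Set.mem_biUnion (Set.mem_union_right _ (Set.mem_image_of_mem _ hx)) ?_
        exact my_mem_varFinset_subst s ![γ0, Term.var x] hvar1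
          (by simp [Term.varFinset])
    have hprem : ∀ γ ∈ Γ'', Term.realize h γ ∈ F := by
      rintro γ (hγ | ⟨x, hx, rfl⟩)
      · exact hΓF γ hγ
      · rw [my_realize_starT]
        simp only [Term.realize_var]
        rw [my_papprox_dot hpart (my_papprox_realize hpart h hh γ0) (hh x)]
        exact hΓF γ0 hγ0
    exact hmod Γ'' φ hcc h hprem
end

section
/- Let ⊢ be a logic with r-partition function ∗ and with an antitheorem Σ all of whose members contain at most the single variable x. Then every rule of the calculus H^r is valid in the containment companion ⊢^r, namely: (H0) if ∅ ⊢ φ then {y∗φ} ⊢^r φ for every variable y; (H1) {x, y} ⊢^r x∗y; (H2) {x∗y} ⊢^r x; (H3) if Γ ⊢ ψ and γ ∈ Γ, then (Γ ∖ {γ}) ∪ {γ∗ψ} ⊢^r ψ; (H4) Σ ⊢^r α for every formula α; (H5) χ(ε, z̄) ⊣⊢^r χ(δ, z̄) for every formula χ(v, z̄) and every identity ε ≈ δ among the partition-function identities P1–P5 read as term identities for ∗. -/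
open FirstOrder FirstOrder.Language

variable {L : FirstOrder.Language.{0, 0}}

section AuxStatement5

variable {L : FirstOrder.Language.{0, 0}}

theorem subst_subst' {α β γ : Type} (t : L.Term α)
    (f : α → L.Term β) (g : β → L.Term γ) :
    (t.subst f).subst g = t.subst (fun i => (f i).subst g) := by
  induction t with
  | var => simp [Term.subst]
  | func _ _ ih => simp [Term.subst, ih]

theorem mem_varFinset_subst' {α β : Type} [DecidableEq α]
    [DecidableEq β] (t : L.Term α) (f : α → L.Term β) (m : β) :
    m ∈ (t.subst f).varFinset ↔ ∃ k ∈ t.varFinset, m ∈ (f k).varFinset := by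
  induction t with
  | var => simp [Term.subst, Term.varFinset]
  | func _ ts ih =>
    simp only [Term.subst, Term.varFinset, Finset.mem_biUnion, Finset.mem_univ, true_and, ih]
    tauto

theorem starT_subst (s : L.Term (Fin 2)) (t u : L.Term ℕ) (σ : ℕ → L.Term ℕ) :
    (starT s t u).subst σ = starT s (t.subst σ) (u.subst σ) := by
  simp only [starT, subst_subst']
  congr 1
  funext i
  fin_cases i <;> simp

theorem mem_Tvar_starT (s : L.Term (Fin 2)) (hs : ∀ i : Fin 2, i ∈ s.varFinset)
    (t u : L.Term ℕ) (m : ℕ) : m ∈ Tvar (starT s t u) ↔ m ∈ Tvar t ∨ m ∈ Tvar u := by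
  simp only [Tvar, starT, Set.mem_setOf_eq, mem_varFinset_subst']
  constructor
  · rintro ⟨k, _, hm⟩
    fin_cases k
    · left; simpa using hm
    · right; simpa using hm
  · rintro (h | h)
    · exact ⟨0, hs 0, by simpa using h⟩
    · exact ⟨1, hs 1, by simpa using h⟩

theorem mem_Tvar_func {n : ℕ} (g : L.Functions (n + 1)) (as : Fin (n + 1) → L.Term ℕ)
    (m : ℕ) : m ∈ Tvar (Term.func g as) ↔ ∃ k, m ∈ Tvar (as k) := by
  simp [Tvar, Term.varFinset]

theorem mem_Tvar_foldl (s : L.Term (Fin 2)) (hs : ∀ i : Fin 2, i ∈ s.varFinset)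
    (l : List (L.Term ℕ)) (b : L.Term ℕ) (m : ℕ) :
    m ∈ Tvar (l.foldl (starT s) b) ↔ m ∈ Tvar b ∨ ∃ a ∈ l, m ∈ Tvar a := by
  induction l generalizing b with
  | nil => simp
  | cons a l ih =>
    simp only [List.foldl_cons, ih, mem_Tvar_starT s hs, List.mem_cons]
    constructor
    · rintro ((h | h) | ⟨a', ha', hm⟩)
      · exact Or.inl h
      · exact Or.inr ⟨a, Or.inl rfl, h⟩
      · exact Or.inr ⟨a', Or.inr ha', hm⟩
    · rintro (h | ⟨a', (rfl | ha'), hm⟩)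
      · exact Or.inl (Or.inl h)
      · exact Or.inl (Or.inr hm)
      · exact Or.inr ⟨a', ha', hm⟩

theorem Tvar_eq_of_PIdent (s : L.Term (Fin 2)) (hs : ∀ i : Fin 2, i ∈ s.varFinset)
    {ε δ : L.Term ℕ} (h : IsPIdentInstance s ε δ) : Tvar ε = Tvar δ := by
  ext m
  rcases h with ⟨a, rfl, rfl⟩ | ⟨a, b, c, rfl, rfl⟩ | ⟨a, b, c, rfl, rfl⟩ |
    ⟨n, g, as, b, rfl, rfl⟩ | ⟨n, g, as, b, rfl, rfl⟩
  · simp only [mem_Tvar_starT s hs]; tauto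
  · simp only [mem_Tvar_starT s hs]; tauto
  · simp only [mem_Tvar_starT s hs]; tauto
  · rw [mem_Tvar_starT s hs, mem_Tvar_func, mem_Tvar_func]
    constructor
    · rintro (⟨k, hk⟩ | hb)
      · exact ⟨k, (mem_Tvar_starT s hs _ _ m).2 (Or.inl hk)⟩
      · exact ⟨0, (mem_Tvar_starT s hs _ _ m).2 (Or.inr hb)⟩
    · rintro ⟨k, hk⟩
      rcases (mem_Tvar_starT s hs _ _ m).1 hk with h | h
      · exact Or.inl ⟨k, h⟩
      · exact Or.inr h
  · rw [mem_Tvar_starT s hs, mem_Tvar_func, mem_Tvar_foldl s hs]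
    constructor
    · rintro (hb | ⟨k, hk⟩)
      · exact Or.inl hb
      · exact Or.inr ⟨as k, List.mem_ofFn.2 ⟨k, rfl⟩, hk⟩
    · rintro (hb | ⟨a', ha', hm⟩)
      · exact Or.inl hb
      · obtain ⟨k, rfl⟩ := List.mem_ofFn.1 ha'
        exact Or.inr ⟨k, hm⟩

theorem Tvar_substVar_subset (χ : L.Term ℕ) (v : ℕ) {ε δ : L.Term ℕ}
    (h : Tvar ε ⊆ Tvar δ) : Tvar (substVar χ v ε) ⊆ Tvar (substVar χ v δ) := by
  intro m hm
  simp only [Tvar, substVar, Set.mem_setOf_eq, mem_varFinset_subst'] at hm ⊢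
  obtain ⟨k, hk, hm⟩ := hm
  refine ⟨k, hk, ?_⟩
  by_cases hkv : k = v
  · simp only [hkv, if_pos rfl] at hm ⊢
    exact h hm
  · simpa [hkv] using hm

theorem deriv_starT_elim (V : ConsLogic L) (s : L.Term (Fin 2))
    (h : V.deriv {starT s (Term.var 0) (Term.var 1)} (Term.var 0)) (t u : L.Term ℕ) :
    V.deriv {starT s t u} t := by
  have := V.substInv _ _ (fun n => if n = 0 then t else u) h
  simpa [SubstImg, Set.image_singleton, starT_subst, Term.subst] using this

theorem SVar_singleton (φ : L.Term ℕ) : SVar ({φ} : Set (L.Term ℕ)) = Tvar φ := by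
  simp [SVar]

end AuxStatement5

/-- Let `⊢` be a logic with r-partition function `∗` and with an
antitheorem `Σ` all of whose members contain at most the single variable `x`.  Then every
rule of the calculus `H^r` is valid in the containment companion `⊢^r`. -/
theorem statement_5 (L : FirstOrder.Language.{0, 0}) [IsEmpty (L.Functions 0)]
    (V : ConsLogic L) (s : L.Term (Fin 2))
    (hpf : HasRPartitionFunction V.deriv s)
    (Sg : Set (L.Term ℕ)) (hanti : IsAntitheorem V.deriv Sg)
    (x : ℕ) (hvar : ∀ ψ ∈ Sg, Tvar ψ ⊆ {x}) :
    -- (H0)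
    (∀ φ : L.Term ℕ, V.deriv ∅ φ → ∀ y : ℕ, CC V {starT s (Term.var y) φ} φ) ∧
    -- (H1)
    CC V {Term.var 0, Term.var 1} (starT s (Term.var 0) (Term.var 1)) ∧
    -- (H2)
    CC V {starT s (Term.var 0) (Term.var 1)} (Term.var 0) ∧
    -- (H3)
    (∀ (Γ : Set (L.Term ℕ)) (ψ γ : L.Term ℕ), V.deriv Γ ψ → γ ∈ Γ →
      CC V ((Γ \ {γ}) ∪ {starT s γ ψ}) ψ) ∧
    -- (H4)
    (∀ α : L.Term ℕ, CC V Sg α) ∧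
    -- (H5)
    (∀ ε δ, IsPIdentInstance s ε δ → ∀ (χ : L.Term ℕ) (v : ℕ),
      CC V {substVar χ v ε} (substVar χ v δ) ∧ CC V {substVar χ v δ} (substVar χ v ε)) := by
  obtain ⟨hs, h1, h2, h5⟩ := hpf
  have hstar := mem_Tvar_starT s hs
  refine ⟨?_, ?_, ?_, ?_, ?_, ?_⟩
  · -- H0
    intro φ hφ y
    left
    refine ⟨V.mono ∅ _ φ (Set.empty_subset _) hφ, ?_⟩
    intro m hm
    rw [SVar_singleton]
    exact (hstar _ _ m).2 (Or.inr hm)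
  · -- H1
    left
    refine ⟨h1, ?_⟩
    intro m hm
    rcases (hstar _ _ m).1 hm with h | h
    · exact Set.mem_biUnion (Set.mem_insert _ _) h
    · exact Set.mem_biUnion (Set.mem_insert_of_mem _ rfl) h
  · -- H2
    left
    refine ⟨h2, ?_⟩
    intro m hm
    rw [SVar_singleton]
    exact (hstar _ _ m).2 (Or.inl hm)
  · -- H3
    intro Γ ψ γ hΓ hγ
    left
    set Δ : Set (L.Term ℕ) := (Γ \ {γ}) ∪ {starT s γ ψ} with hΔ
    have hγΔ : V.deriv Δ γ :=
      V.mono {starT s γ ψ} Δ γ Set.subset_union_right (deriv_starT_elim V s h2 γ ψ)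
    have hall : ∀ δ ∈ Γ, V.deriv Δ δ := by
      intro δ hδ
      by_cases hδγ : δ = γ
      · exact hδγ ▸ hγΔ
      · exact V.refl _ _ (Or.inl ⟨hδ, hδγ⟩)
    refine ⟨V.cut Δ Γ ψ hall (V.mono Γ (Δ ∪ Γ) ψ Set.subset_union_right hΓ), ?_⟩
    intro m hm
    exact Set.mem_biUnion (show starT s γ ψ ∈ Δ from Or.inr rfl) ((hstar γ ψ m).2 (Or.inr hm))
  · -- H4
    intro α
    exact Or.inr ⟨Sg, hanti, subset_rfl⟩
  · -- H5
    intro ε δ hinst χ v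
    have hv := Tvar_eq_of_PIdent s hs hinst
    have h5' := h5 ε δ hinst χ v
    constructor
    · left
      refine ⟨h5'.1, ?_⟩
      rw [SVar_singleton]
      exact Tvar_substVar_subset χ v hv.ge
    · left
      refine ⟨h5'.2, ?_⟩
      rw [SVar_singleton]
      exact Tvar_substVar_subset χ v hv.le
end

section
/- If ⊢ is a finitary logic, then its containment companion ⊢^r is finitary: whenever Γ ⊢^r φ, there exists a finite subset Δ ⊆ Γ such that Δ ⊢^r φ. -/
open FirstOrder FirstOrder.Language

variable {L : FirstOrder.Language.{0, 0}}

lemma subst_comp (t : L.Term ℕ) (σ ρ : ℕ → L.Term ℕ) :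
    (t.subst σ).subst ρ = t.subst (fun n => (σ n).subst ρ) := by
  induction t with
  | var => simp [Term.subst]
  | func f ts ih => simp [Term.subst, ih]

lemma SubstImg_comp (σ ρ : ℕ → L.Term ℕ) (Γ : Set (L.Term ℕ)) :
    SubstImg ρ (SubstImg σ Γ) = SubstImg (fun n => (σ n).subst ρ) Γ := by
  simp only [SubstImg, Set.image_image, subst_comp]

/-- If `⊢` is a finitary logic, then its containment companion `⊢^r` is
finitary. -/
theorem statement_6 (L : FirstOrder.Language.{0, 0}) [IsEmpty (L.Functions 0)]
    (V : ConsLogic L) (hfin : FinitaryRel V.deriv) :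
    ∀ (Γ : Set (L.Term ℕ)) (φ : L.Term ℕ), CC V Γ φ →
      ∃ Δ : Finset (L.Term ℕ), ↑Δ ⊆ Γ ∧ CC V ↑Δ φ := by
  classical
  intro Γ φ h
  rcases h with ⟨hder, hvar⟩ | ⟨S, hS, hSΓ⟩
  · obtain ⟨Δ, hΔΓ, hΔder⟩ := hfin Γ φ hder
    have hchoice : ∀ x ∈ φ.varFinset, ∃ γ, γ ∈ Γ ∧ x ∈ Tvar γ := by
      intro x hx
      have : x ∈ SVar Γ := hvar hx
      simpa [SVar, Set.mem_iUnion] using this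
    choose g hg1 hg2 using hchoice
    set E : Finset (L.Term ℕ) := φ.varFinset.attach.image (fun x => g x.1 x.2) with hE
    refine ⟨Δ ∪ E, ?_, Or.inl ⟨?_, ?_⟩⟩
    · intro ψ hψ
      simp only [Finset.coe_union, Set.mem_union] at hψ
      rcases hψ with hψ | hψ
      · exact hΔΓ hψ
      · simp only [hE, Finset.coe_image, Set.mem_image, Finset.mem_coe,
          Finset.mem_attach, true_and] at hψ
        obtain ⟨⟨x, hx⟩, _, rfl⟩ := hψ
        exact hg1 x hx
    · exact V.mono _ _ _ (by simp) hΔder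
    · intro x hx
      have hx' : x ∈ φ.varFinset := hx
      have hgmem : g x hx' ∈ (↑(Δ ∪ E) : Set (L.Term ℕ)) := by
        simp only [Finset.coe_union, Set.mem_union]
        right
        simp only [hE, Finset.coe_image, Set.mem_image, Finset.mem_coe]
        exact ⟨⟨x, hx'⟩, Finset.mem_attach _ _, rfl⟩
      exact Set.mem_biUnion hgmem (hg2 x hx')
  · -- antitheorem case
    set σe : ℕ → L.Term ℕ := fun n => Term.var (2 * n) with hσe
    have h1 : V.deriv (SubstImg σe S) (Term.var 1) := hS σe (Term.var 1)
    obtain ⟨Δ, hΔ, hΔder⟩ := hfin _ _ h1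
    have hchoice : ∀ d ∈ Δ, ∃ γ, γ ∈ S ∧ γ.subst σe = d := by
      intro d hd
      have := hΔ hd
      simpa [SubstImg, Set.mem_image] using this
    choose g hg1 hg2 using hchoice
    set Sg0 : Finset (L.Term ℕ) := Δ.attach.image (fun d => g d.1 d.2) with hSg0
    have hSg0S : (↑Sg0 : Set (L.Term ℕ)) ⊆ S := by
      intro ψ hψ
      simp only [hSg0, Finset.coe_image, Set.mem_image, Finset.mem_coe,
        Finset.mem_attach, true_and] at hψ
      obtain ⟨⟨d, hd⟩, _, rfl⟩ := hψ
      exact hg1 d hd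
    have hΔsub : (↑Δ : Set (L.Term ℕ)) ⊆ SubstImg σe ↑Sg0 := by
      intro d hd
      refine ⟨g d hd, ?_, hg2 d hd⟩
      simp only [hSg0, Finset.coe_image, Set.mem_image, Finset.mem_coe]
      exact ⟨⟨d, hd⟩, Finset.mem_attach _ _, rfl⟩
    have hanti : IsAntitheorem V.deriv (↑Sg0 : Set (L.Term ℕ)) := by
      intro τ ψ
      have h2 : V.deriv (SubstImg σe ↑Sg0) (Term.var 1) := V.mono _ _ _ hΔsub hΔder
      set ρ : ℕ → L.Term ℕ := fun m => if m = 1 then ψ else τ (m / 2) with hρ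
      have h3 := V.substInv _ _ ρ h2
      have he1 : SubstImg ρ (SubstImg σe ↑Sg0) = SubstImg τ ↑Sg0 := by
        have hfun : (fun n => (σe n).subst ρ) = τ := by
          funext n
          simp only [hσe, hρ, Term.subst]
          have h2n : 2 * n ≠ 1 := by omega
          simp [h2n, Nat.mul_div_cancel_left n (by norm_num : 0 < 2)]
        rw [SubstImg_comp, hfun]
      have he2 : (Term.var 1 : L.Term ℕ).subst ρ = ψ := by simp [Term.subst, hρ]
      rwa [he1, he2] at h3
    exact ⟨Sg0, fun ψ hψ => hSΓ (hSg0S hψ), Or.inr ⟨↑Sg0, hanti, subset_rfl⟩⟩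
end

section
/- If ⊢ is a logic, then its containment companion ⊢^r is a consequence relation: it is reflexive (φ ∈ Γ implies Γ ⊢^r φ), monotone (Γ ⊆ Δ and Γ ⊢^r φ imply Δ ⊢^r φ), and satisfies cut (if Γ ⊢^r δ for all δ ∈ Δ and Γ ∪ Δ ⊢^r φ, then Γ ⊢^r φ). -/
open FirstOrder FirstOrder.Language

variable {L : FirstOrder.Language.{0, 0}}

/-- If `⊢` is a logic, then its containment companion `⊢^r` is a
consequence relation: reflexive, monotone and satisfying cut. -/
theorem statement_8 (L : FirstOrder.Language.{0, 0}) [IsEmpty (L.Functions 0)]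
    (V : ConsLogic L) :
    (∀ (Γ : Set (L.Term ℕ)) (φ : L.Term ℕ), φ ∈ Γ → CC V Γ φ) ∧
    (∀ (Γ Δ : Set (L.Term ℕ)) (φ : L.Term ℕ), Γ ⊆ Δ → CC V Γ φ → CC V Δ φ) ∧
    (∀ (Γ Δ : Set (L.Term ℕ)) (φ : L.Term ℕ),
      (∀ δ ∈ Δ, CC V Γ δ) → CC V (Γ ∪ Δ) φ → CC V Γ φ) := by

  refine ⟨?_, ?_, ?_⟩
  · intro Γ φ hφ
    exact Or.inl ⟨V.refl Γ φ hφ, fun x hx => Set.mem_biUnion hφ hx⟩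
  · intro Γ Δ φ hΓΔ h
    rcases h with ⟨hd, hv⟩ | ⟨S, hS, hSΓ⟩
    · exact Or.inl ⟨V.mono Γ Δ φ hΓΔ hd,
        hv.trans (Set.biUnion_subset_biUnion_left hΓΔ)⟩
    · exact Or.inr ⟨S, hS, hSΓ.trans hΓΔ⟩
  · intro Γ Δ φ hΔ h
    by_cases hanti : ∃ S, IsAntitheorem V.deriv S ∧ S ⊆ Γ
    · exact Or.inr hanti
    push_neg at hanti
    -- every δ ∈ Δ is derived with variable inclusion
    have hΔ' : ∀ δ ∈ Δ, V.deriv Γ δ ∧ Tvar δ ⊆ SVar Γ := by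
      intro δ hδ
      rcases hΔ δ hδ with h' | ⟨S, hS, hSΓ⟩
      · exact h'
      · exact absurd hSΓ (hanti S hS)
    have hder : ∀ ψ ∈ Γ ∪ Δ, V.deriv Γ ψ := by
      intro ψ hψ
      rcases hψ with hψ | hψ
      · exact V.refl Γ ψ hψ
      · exact (hΔ' ψ hψ).1
    rcases h with ⟨hd, hv⟩ | ⟨S, hS, hSΓΔ⟩
    · left
      constructor
      · exact V.cut Γ Δ φ (fun δ hδ => (hΔ' δ hδ).1) hd
      · intro x hx
        have := hv hx
        rw [SVar] at this ⊢
        rcases Set.mem_iUnion₂.1 this with ⟨γ, hγ, hxγ⟩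
        rcases hγ with hγ | hγ
        · exact Set.mem_biUnion hγ hxγ
        · exact (hΔ' γ hγ).2 hxγ
    · -- Γ itself is an antitheorem
      right
      refine ⟨Γ, ?_, subset_rfl⟩
      intro σ χ
      have hSderiv : ∀ s ∈ S, V.deriv Γ s := fun s hs => hder s (hSΓΔ hs)
      have h1 : ∀ ψ ∈ SubstImg σ S, V.deriv (SubstImg σ Γ) ψ := by
        rintro ψ ⟨s, hs, rfl⟩
        exact V.substInv Γ s σ (hSderiv s hs)
      have h2 : V.deriv (SubstImg σ Γ ∪ SubstImg σ S) χ :=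
        V.mono _ _ χ Set.subset_union_right (hS σ χ)
      exact V.cut _ _ χ h1 h2
end

section
/- Let A be a set and · : A × A → A a binary operation satisfying (P1) a·a = a, (P2) a·(b·c) = (a·b)·c, and (P3) a·(b·c) = a·(c·b), and let ≈ be the equivalence relation a ≈ b iff (a·b = a and b·a = b). Then the operation on equivalence classes given by [a] ∨ [b] := [a·b] is well-defined (i.e., a ≈ a' and b ≈ b' imply a·b ≈ a'·b'), and it makes the quotient A/≈ a semilattice: ∨ is idempotent, commutative, and associative. -/
/-- If `·` satisfies (P1)–(P3) and `≈` is the induced equivalence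
relation, then `[a] ∨ [b] := [a·b]` is well-defined on equivalence classes, and it makes
the quotient `A/≈` a semilattice: `∨` is idempotent, commutative and associative. -/
theorem statement_15 (A : Type) (d : A → A → A)
    (hP1 : ∀ a, d a a = a)
    (hP2 : ∀ a b c, d a (d b c) = d (d a b) c)
    (hP3 : ∀ a b c, d a (d b c) = d a (d c b)) :
    -- well-definedness of `[a] ∨ [b] := [a·b]`
    (∀ a a' b b' : A, PApprox d a a' → PApprox d b b' → PApprox d (d a b) (d a' b')) ∧
    -- idempotency of `∨` on the quotient
    (∀ a : A, PApprox d (d a a) a) ∧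
    -- commutativity of `∨` on the quotient
    (∀ a b : A, PApprox d (d a b) (d b a)) ∧
    -- associativity of `∨` on the quotient
    (∀ a b c : A, PApprox d (d a (d b c)) (d (d a b) c)) := by
  have swap : ∀ x y z, d (d x y) z = d (d x z) y := by
    intro x y z
    rw [← hP2, hP3, hP2]
  have key : ∀ a a' b b', PApprox d a a' → PApprox d b b' → d (d a b) (d a' b') = d a b := by
    intro a a' b b' ha hb
    rw [hP2, swap a b a', ha.1, ← hP2, hb.1]
  refine ⟨fun a a' b b' ha hb => ⟨key a a' b b' ha hb,
    key a' a b' b ⟨ha.2, ha.1⟩ ⟨hb.2, hb.1⟩⟩, ?_, ?_, ?_⟩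
  · intro a; rw [hP1]; exact ⟨hP1 a, hP1 a⟩
  · intro a b
    have comm : ∀ x y, d (d x y) (d y x) = d x y := by
      intro x y
      rw [← hP2, hP2 y y x, hP1, hP3, hP2, hP1]
    exact ⟨comm a b, comm b a⟩
  · intro a b c; rw [hP2]; exact ⟨hP1 _, hP1 _⟩
end

section
/- Let A be an L-structure and · a partition function on A, with ≈ the relation a ≈ b iff (a·b = a and b·a = b). Then each ≈-class is closed under the operations of A: for every n-ary operation symbol g (n ≥ 1) and all a_1, …, a_n ∈ A with a_1 ≈ a_2 ≈ … ≈ a_n, one has g^A(a_1, …, a_n) ≈ a_1. Hence every ≈-class is the universe of a substructure of A. -/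
open FirstOrder FirstOrder.Language

variable {L : FirstOrder.Language.{0, 0}}

/-- Let `·` be a partition function on an `L`-structure `A`.  Then every
`≈`-class is closed under the operations of `A`: if `a_1 ≈ a_2 ≈ … ≈ a_n`, then
`g(a_1, …, a_n) ≈ a_1`. -/
theorem statement_17 (L : FirstOrder.Language.{0, 0}) [IsEmpty (L.Functions 0)]
    (A : Type) [L.Structure A] (d : A → A → A)
    (hpart : IsPartitionFunction (L := L) A d)
    (n : ℕ) (g : L.Functions (n + 1)) (as : Fin (n + 1) → A)
    (hsame : ∀ k, PApprox d (as k) (as 0)) :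
    PApprox d (Structure.funMap g as) (as 0) := by
  obtain ⟨-, -, -, h4, h5⟩ := hpart
  constructor
  · rw [h4]
    congr 1
    funext k
    exact (hsame k).1
  · rw [h5]
    have key : ∀ (l : List A) (b : A), (∀ x ∈ l, d b x = b) → l.foldl d b = b := by
      intro l
      induction l with
      | nil => intro b _; rfl
      | cons x xs ih =>
        intro b hb
        simp only [List.foldl_cons, hb x List.mem_cons_self]
        exact ih b fun y hy => hb y (List.mem_cons_of_mem x hy)
    apply key
    intro x hx
    obtain ⟨k, rfl⟩ := List.mem_ofFn.1 hx
    exact (hsame k).2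
end
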